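/- For the polynomial h(t) = (t+1)^2 t^2 (t+1/2)^2 (t^2-1/36)(t^2-1/9)(t-1/2), the zeroth Gegenbauer coefficient in dimension 48 equals h_0 = 1/13478400, and h(1)/h_0 = 52416000. -/

import Mathlib

open Polynomial Finset
open scoped Classical

/-- Gegenbauer polynomials for dimension `n`, normalized by `P_i(1) = 1`. -/
noncomputable def gegen (n : ℕ) : ℕ → Polynomial ℝ
  | 0 => 1
  | 1 => X
  | (i + 2) =>
      Polynomial.C (((n : ℝ) + i - 1)⁻¹) *
        (Polynomial.C ((n : ℝ) + 2 * i) * X * gegen n (i + 1) -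
          Polynomial.C ((i : ℝ) + 1) * gegen n i)

/-- The `i`-th moment of a code. -/
noncomputable def moment (n i : ℕ) (A : Finset (EuclideanSpace ℝ (Fin n))) : ℝ :=
  ∑ x ∈ A, ∑ y ∈ A, (gegen n i).eval (inner ℝ x y : ℝ)

/-- A spherical code: a finite set of unit vectors. -/
def onSphere {n : ℕ} (A : Finset (EuclideanSpace ℝ (Fin n))) : Prop :=
  ∀ x ∈ A, ‖x‖ = 1

/-- A spherical `τ`-design, characterized by vanishing of the first `τ` moments. -/
def isDesign (n τ : ℕ) (A : Finset (EuclideanSpace ℝ (Fin n))) : Prop :=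
  ∀ i, 1 ≤ i → i ≤ τ → moment n i A = 0

/-- The zeroth Gegenbauer coefficient of a polynomial in dimension `n`:
its average against the weight `(1-t^2)^((n-3)/2)` on `[-1,1]`. -/
noncomputable def coeff0 (n : ℕ) (f : Polynomial ℝ) : ℝ :=
  (∫ t in (-1 : ℝ)..1, f.eval t * (1 - t ^ 2) ^ (((n : ℝ) - 3) / 2)) /
  (∫ t in (-1 : ℝ)..1, (1 - t ^ 2) ^ (((n : ℝ) - 3) / 2))

noncomputable def hpoly : Polynomial ℝ :=
  (X + 1) ^ 2 * X ^ 2 * (X + Polynomial.C (1 / 2)) ^ 2 *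
    (X ^ 2 - Polynomial.C (1 / 36)) * (X ^ 2 - Polynomial.C (1 / 9)) *
    (X - Polynomial.C (1 / 2))

noncomputable def gpoly : Polynomial ℝ :=
  (X + 1) * X ^ 2 * (X + Polynomial.C (1 / 2)) ^ 2 *
    (X ^ 2 - Polynomial.C (1 / 36)) * (X ^ 2 - Polynomial.C (1 / 9)) *
    (X - Polynomial.C (1 / 2)) ^ 2

noncomputable def upoly : Polynomial ℝ :=
  (X + 1) * X ^ 2 * (X ^ 2 - Polynomial.C (1 / 36)) ^ 2 *
    (X ^ 2 - Polynomial.C (1 / 9)) * (X ^ 2 - Polynomial.C (1 / 4))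


/-! ### Auxiliary development -/

noncomputable def W : ℝ → ℝ := fun t => (1 - t ^ 2) ^ ((45 : ℝ) / 2)

noncomputable def II (k : ℕ) : ℝ := ∫ t in (-1 : ℝ)..1, t ^ k * W t

lemma contW : Continuous W :=
  Continuous.rpow_const (by continuity) fun _ => Or.inr (by norm_num)

lemma intW (k : ℕ) :
    IntervalIntegrable (fun t => t ^ k * W t) MeasureTheory.volume (-1) 1 :=
  ((continuous_pow k).mul contW).intervalIntegrable _ _

lemma W_neg (t : ℝ) : W (-t) = W t := by simp [W]

lemma II_odd (k : ℕ) : II (2 * k + 1) = 0 := by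
  have h1 : (∫ t in (-1:ℝ)..1, (-t) ^ (2*k+1) * W (-t)) = II (2*k+1) := by
    rw [intervalIntegral.integral_comp_neg (f := fun t => t ^ (2*k+1) * W t)]
    simp [II]
  have h2 : ∀ t : ℝ, (-t) ^ (2*k+1) * W (-t) = -(t ^ (2*k+1) * W t) := by
    intro t
    rw [W_neg, Odd.neg_pow ⟨k, by ring⟩]
    ring
  have h3 : (∫ t in (-1:ℝ)..1, (-t) ^ (2*k+1) * W (-t)) = -II (2*k+1) := by
    simp only [h2]
    rw [intervalIntegral.integral_neg]
    rfl
  have := h1.symm.trans h3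
  linarith

lemma II0_pos : 0 < II 0 := by
  apply intervalIntegral.intervalIntegral_pos_of_pos_on (intW 0)
  · intro x hx
    have h : 0 < 1 - x ^ 2 := by nlinarith [hx.1, hx.2]
    have := Real.rpow_pos_of_pos h ((45:ℝ)/2)
    simpa [W] using this
  · norm_num

lemma II_rec (m : ℕ) : ((2*m+48 : ℝ)) * II (2*m+2) = (2*m+1 : ℝ) * II (2*m) := by
  set D : ℝ → ℝ := fun t =>
    (2*m+1 : ℝ) * t ^ (2*m) * (1 - t^2) ^ ((47:ℝ)/2)
      + t ^ (2*m+1) * ((0 - 2*t^1) * ((47:ℝ)/2) * (1 - t^2) ^ ((47:ℝ)/2 - 1)) with hD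
  have hF : ∀ t : ℝ, HasDerivAt (fun s => s ^ (2*m+1) * (1 - s^2) ^ ((47:ℝ)/2)) (D t) t := by
    intro t
    have h1 : HasDerivAt (fun s : ℝ => s ^ (2*m+1)) ((2*m+1 : ℝ) * t ^ (2*m)) t := by
      simpa using hasDerivAt_pow (2*m+1) t
    have h2 : HasDerivAt (fun s : ℝ => 1 - s^2) (0 - 2 * t^1) t :=
      (hasDerivAt_const t (1:ℝ)).sub (by simpa using hasDerivAt_pow 2 t)
    exact h1.mul (h2.rpow_const (Or.inr (by norm_num)))
  have hDcont : Continuous D := by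
    have c1 : Continuous fun t : ℝ => (1 - t^2) ^ ((47:ℝ)/2) :=
      Continuous.rpow_const (by continuity) fun _ => Or.inr (by norm_num)
    have c2 : Continuous fun t : ℝ => (1 - t^2) ^ ((47:ℝ)/2 - 1) :=
      Continuous.rpow_const (by continuity) fun _ => Or.inr (by norm_num)
    rw [hD]
    exact ((continuous_const.mul (continuous_pow _)).mul c1).add
      ((continuous_pow _).mul (((continuous_const.sub
        (continuous_const.mul (continuous_pow 1))).mul continuous_const).mul c2))
  have hzero : (∫ t in (-1:ℝ)..1, D t) = 0 := by
    rw [intervalIntegral.integral_eq_sub_of_hasDerivAt (fun t _ => hF t)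
      (hDcont.intervalIntegrable _ _)]
    have h0 : ((0:ℝ)) ^ ((47:ℝ)/2) = 0 := Real.zero_rpow (by norm_num)
    norm_num [h0]
  have hcong : ∀ t ∈ Set.uIcc (-1:ℝ) 1, D t =
      (2*m+1 : ℝ) * (t^(2*m) * W t) - (2*m+48 : ℝ) * (t^(2*m+2) * W t) := by
    intro t ht
    rw [Set.uIcc_of_le (by norm_num)] at ht
    have ht2 : (0:ℝ) ≤ 1 - t^2 := by nlinarith [ht.1, ht.2]
    have hsplit : (1 - t^2) ^ ((47:ℝ)/2) = (1 - t^2) * (1 - t^2) ^ ((45:ℝ)/2) := by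
      have : ((47:ℝ)/2) = 1 + 45/2 := by norm_num
      rw [this, Real.rpow_add' ht2 (by norm_num), Real.rpow_one]
    have he : ((47:ℝ)/2 - 1) = (45:ℝ)/2 := by norm_num
    rw [hD]
    simp only [he, hsplit, W]
    ring
  have hsum : (∫ t in (-1:ℝ)..1, D t) =
      (2*m+1 : ℝ) * II (2*m) - (2*m+48 : ℝ) * II (2*m+2) := by
    rw [intervalIntegral.integral_congr hcong,
      intervalIntegral.integral_sub ((intW (2*m)).const_mul _) ((intW (2*m+2)).const_mul _),
      intervalIntegral.integral_const_mul, intervalIntegral.integral_const_mul]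
    rfl
  rw [hsum] at hzero
  linarith

lemma II2 : II 2 = (1/48) * II 0 := by
  have h := II_rec 0; norm_num at h; linarith
lemma II4 : II 4 = (1/800) * II 0 := by
  have h := II_rec 1; norm_num [II2] at h; linarith
lemma II6 : II 6 = (1/8320) * II 0 := by
  have h := II_rec 2; norm_num [II4] at h; linarith
lemma II8 : II 8 = (7/449280) * II 0 := by
  have h := II_rec 3; norm_num [II6] at h; linarith
lemma II10 : II 10 = (1/399360) * II 0 := by
  have h := II_rec 4; norm_num [II8] at h; linarith

noncomputable def cf : ℕ → ℝ := fun k =>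
  if k = 2 then -1/2592 else if k = 3 then -1/648 else if k = 4 then 11/648 else
  if k = 5 then 97/1296 else if k = 6 then -259/2592 else if k = 7 then -959/1296 else
  if k = 8 then -17/36 else if k = 9 then 29/18 else if k = 10 then 5/2 else
  if k = 11 then 1 else 0

lemma int_sum (n : ℕ) (a : ℕ → ℝ) :
    (∫ t in (-1:ℝ)..1, ∑ k ∈ Finset.range n, a k * (t ^ k * W t)) =
      ∑ k ∈ Finset.range n, a k * II k := by
  rw [intervalIntegral.integral_finset_sum (fun k _ => (intW k).const_mul (a k))]
  simp only [intervalIntegral.integral_const_mul]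
  rfl

lemma hexp (t : ℝ) : hpoly.eval t * W t = ∑ k ∈ Finset.range 12, cf k * (t ^ k * W t) := by
  simp only [Finset.sum_range_succ, Finset.sum_range_zero, cf, hpoly, eval_mul, eval_add,
    eval_sub, eval_pow, eval_X, eval_C, eval_one]
  norm_num
  ring

lemma numerator_eq : (∫ t in (-1:ℝ)..1, hpoly.eval t * W t) = (1/13478400) * II 0 := by
  have h1 : (∫ t in (-1:ℝ)..1, hpoly.eval t * W t)
      = ∑ k ∈ Finset.range 12, cf k * II k := by
    simp only [hexp]
    exact int_sum 12 cf
  rw [h1]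
  have o3 : II 3 = 0 := II_odd 1
  have o5 : II 5 = 0 := II_odd 2
  have o7 : II 7 = 0 := II_odd 3
  have o9 : II 9 = 0 := II_odd 4
  have o11 : II 11 = 0 := II_odd 5
  simp only [Finset.sum_range_succ, Finset.sum_range_zero, cf]
  norm_num [o3, o5, o7, o9, o11, II2, II4, II6, II8, II10]
  ring

theorem stmt6 : coeff0 48 hpoly = 1 / 13478400 ∧
    hpoly.eval 1 / coeff0 48 hpoly = 52416000 := by
  have he : (((48:ℕ):ℝ) - 3) / 2 = (45:ℝ)/2 := by norm_num
  have hc : coeff0 48 hpoly = 1 / 13478400 := by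
    rw [coeff0, he]
    have hnum : (∫ t in (-1:ℝ)..1, hpoly.eval t * (1 - t^2) ^ ((45:ℝ)/2))
        = (1/13478400) * II 0 := numerator_eq
    have hden : (∫ t in (-1:ℝ)..1, (1 - t^2) ^ ((45:ℝ)/2)) = II 0 := by
      have : ∀ t : ℝ, (1 - t^2) ^ ((45:ℝ)/2) = t ^ 0 * W t := by
        intro t; rw [pow_zero, one_mul]; rfl
      simp only [this]
      rfl
    rw [hnum, hden, mul_div_assoc, div_self (ne_of_gt II0_pos), mul_one]
  refine ⟨hc, ?_⟩
  rw [hc]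
  have h1 : hpoly.eval 1 = 35/9 := by
    simp only [hpoly, eval_mul, eval_add, eval_sub, eval_pow, eval_X, eval_C, eval_one]
    norm_num
  rw [h1]
  norm_num
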